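/- Take h = p, so that I_i(q) = ‖q_{-i}‖·(p(‖q_{-i}‖) − p(‖q‖)). Then for every profile q ≥ 0 with ‖q‖ > 0: (a) I_i(q) ≤ 0 for every i, and hence the mechanism has budget deficit: Σ_i I_i(q) ≤ 0, equivalently Σ_i o_i(q) ≤ C(‖q‖); and (b) the mechanism is individually rational: if μ ≥ 0 is a profile such that for every i, μ_i maximizes q ↦ v_i(q) − C(q + ‖μ_{-i}‖) over q ≥ 0, then W_i(μ) ≥ 0 for every i. -/
import Mathlib


open Finset Set

/-- Taking `h = p`, so `I_i(q) = ‖q_{-i}‖·(p(‖q_{-i}‖) − p(‖q‖))`: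
(a) every incentive is non-positive, the mechanism has budget deficit
(`Σ_i I_i(q) ≤ 0`, equivalently `Σ_i o_i(q) ≤ C(‖q‖)`); and
(b) the mechanism is individually rational at any profile `μ` where each `μ_i`
maximizes `q ↦ v_i(q) − C(q + ‖μ_{-i}‖)` over `q ≥ 0`. -/
theorem statement_8
    (N : ℕ) (v v' : Fin N → ℝ → ℝ) (C p : ℝ → ℝ)
    (hv_deriv : ∀ i x, HasDerivAt (v i) (v' i x) x)
    (hv_concave : ∀ i, ConcaveOn ℝ (Ici (0 : ℝ)) (v i))
    (hv_mono : ∀ i, MonotoneOn (v i) (Ici (0 : ℝ)))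
    (hv0 : ∀ i, v i 0 = 0)
    (hC_diff : DifferentiableOn ℝ C (Ici (0 : ℝ)))
    (hC_sconvex : StrictConvexOn ℝ (Ici (0 : ℝ)) C)
    (hC0 : C 0 = 0)
    (hCpos : ∀ g : ℝ, 0 < g → 0 < C g)
    (hp : ∀ g : ℝ, 0 < g → p g = C g / g)
    (hp_mono : MonotoneOn p (Ioi (0 : ℝ))) :
    -- (a) budget deficit
    (∀ q : Fin N → ℝ, (∀ i, 0 ≤ q i) → 0 < ∑ i, q i →
      (∀ i, ((∑ j, q j) - q i) * (p ((∑ j, q j) - q i) - p (∑ j, q j)) ≤ 0) ∧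
      (∑ i, ((∑ j, q j) - q i) * (p ((∑ j, q j) - q i) - p (∑ j, q j))) ≤ 0 ∧
      (∑ i, (q i * p (∑ j, q j) +
          ((∑ j, q j) - q i) * (p ((∑ j, q j) - q i) - p (∑ j, q j))))
        ≤ C (∑ j, q j)) ∧
    -- (b) individual rationality
    (∀ μ : Fin N → ℝ, (∀ i, 0 ≤ μ i) →
      (∀ i, ∀ x : ℝ, 0 ≤ x →
          v i x - C (x + ((∑ j, μ j) - μ i)) ≤ v i (μ i) - C (∑ j, μ j)) →
      ∀ i, 0 ≤ v i (μ i) - C (∑ j, μ j) +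
          ((∑ j, μ j) - μ i) * p ((∑ j, μ j) - μ i)) := by

  have htp : ∀ t : ℝ, 0 ≤ t → t * p t = C t := by
    intro t ht
    rcases ht.eq_or_lt with h | h
    · simp [← h, hC0]
    · rw [hp t h]; field_simp
  constructor
  · intro q hq hs
    have hterm : ∀ i, ((∑ j, q j) - q i) * (p ((∑ j, q j) - q i) - p (∑ j, q j)) ≤ 0 := by
      intro i
      set t := (∑ j, q j) - q i with ht
      have ht0 : 0 ≤ t := by
        have : q i ≤ ∑ j, q j := Finset.single_le_sum (fun j _ => hq j) (Finset.mem_univ i)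
        linarith
      rcases ht0.eq_or_lt with h | h
      · simp [← h]
      · have hle : p t ≤ p (∑ j, q j) := hp_mono (mem_Ioi.2 h) (mem_Ioi.2 hs) (by
          have := hq i; linarith)
        nlinarith
    refine ⟨hterm, Finset.sum_nonpos fun i _ => hterm i, ?_⟩
    have : ∑ i, q i * p (∑ j, q j) = C (∑ j, q j) := by
      rw [← Finset.sum_mul, htp _ hs.le]
    calc ∑ i, (q i * p (∑ j, q j) +
          ((∑ j, q j) - q i) * (p ((∑ j, q j) - q i) - p (∑ j, q j)))
        = (∑ i, q i * p (∑ j, q j)) +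
          ∑ i, ((∑ j, q j) - q i) * (p ((∑ j, q j) - q i) - p (∑ j, q j)) :=
          Finset.sum_add_distrib
      _ ≤ C (∑ j, q j) := by
          rw [this]
          have := Finset.sum_nonpos (s := Finset.univ)
            (f := fun i => ((∑ j, q j) - q i) * (p ((∑ j, q j) - q i) - p (∑ j, q j)))
            (fun i _ => hterm i)
          linarith
  · intro μ hμ hmax i
    set t := (∑ j, μ j) - μ i with ht
    have ht0 : 0 ≤ t := by
      have : μ i ≤ ∑ j, μ j := Finset.single_le_sum (fun j _ => hμ j) (Finset.mem_univ i)
      linarith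
    have h0 := hmax i 0 le_rfl
    rw [hv0 i, zero_add] at h0
    have := htp t ht0
    linarith
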